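/- arXiv:1612.06517 — 2 statements merged into one kernel-verified Lean document; each statement's English description precedes it below -/
import Mathlib

section
/- Heine-type formula for generalized averaged characteristic polynomials: for the ensemble with density proportional to ∏_{i<j}(x_j-x_i)(x_j^θ-x_i^θ) ∏_k w(x_k) on (0,∞)^k, the polynomial p_k(x) = E[∏_{l=1}^k (x - x_l)] is monic of degree k and satisfies ∫_0^∞ w(x) p_k(x) x^{θj} dx = 0 for all 0 ≤ j ≤ k-1. -/
open MeasureTheory Finset

lemma box_indicator_prod {k : ℕ} (f : Fin k → ℝ → ℝ) (x : Fin k → ℝ) :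
    (Set.univ.pi fun _ : Fin k => Set.Ioi (0:ℝ)).indicator (fun X => ∏ i, f i (X i)) x
      = ∏ i, (Set.Ioi (0:ℝ)).indicator (f i) (x i) := by
  by_cases hx : x ∈ Set.univ.pi fun _ : Fin k => Set.Ioi (0:ℝ)
  · rw [Set.indicator_of_mem hx]
    exact Finset.prod_congr rfl fun i _ =>
      (Set.indicator_of_mem (hx i (Set.mem_univ i)) _).symm
  · rw [Set.indicator_of_notMem hx]
    rw [Set.mem_pi] at hx; push_neg at hx
    obtain ⟨i, _, hi⟩ := hx
    exact (Finset.prod_eq_zero (Finset.mem_univ i)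
      (by rw [Set.indicator_of_notMem hi])).symm

lemma box_integrable {k : ℕ} {f : Fin k → ℝ → ℝ}
    (hf : ∀ i, IntegrableOn (f i) (Set.Ioi 0)) :
    IntegrableOn (fun X : Fin k → ℝ => ∏ i, f i (X i))
      (Set.univ.pi fun _ : Fin k => Set.Ioi (0:ℝ)) := by
  have hbox : MeasurableSet (Set.univ.pi fun _ : Fin k => Set.Ioi (0:ℝ)) :=
    MeasurableSet.univ_pi fun _ => measurableSet_Ioi
  have h1 : ∀ i, Integrable ((Set.Ioi (0:ℝ)).indicator (f i)) :=
    fun i => (integrable_indicator_iff measurableSet_Ioi).2 (hf i)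
  have h2 : Integrable (fun x : Fin k → ℝ => ∏ i, (Set.Ioi (0:ℝ)).indicator (f i) (x i)) :=
    Integrable.fintype_prod (f := fun i => (Set.Ioi (0:ℝ)).indicator (f i)) h1
  have h3 : Integrable ((Set.univ.pi fun _ : Fin k => Set.Ioi (0:ℝ)).indicator
      (fun X : Fin k → ℝ => ∏ i, f i (X i))) :=
    h2.congr (Filter.Eventually.of_forall fun x => (box_indicator_prod f x).symm)
  exact (integrable_indicator_iff hbox).1 h3

lemma box_integral {k : ℕ} (f : Fin k → ℝ → ℝ) :
    ∫ X in Set.univ.pi fun _ : Fin k => Set.Ioi (0:ℝ), ∏ i, f i (X i)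
      = ∏ i, ∫ y in Set.Ioi (0:ℝ), f i y := by
  have hbox : MeasurableSet (Set.univ.pi fun _ : Fin k => Set.Ioi (0:ℝ)) :=
    MeasurableSet.univ_pi fun _ => measurableSet_Ioi
  rw [← integral_indicator hbox]
  simp_rw [box_indicator_prod]
  rw [integral_fintype_prod_volume_eq_prod (f := fun i => (Set.Ioi (0:ℝ)).indicator (f i))]
  exact Finset.prod_congr rfl fun i _ => integral_indicator measurableSet_Ioi

lemma vandermonde_expand {n : ℕ} (v : Fin n → ℝ) :
    ∏ i : Fin n, ∏ j ∈ Finset.Ioi i, (v j - v i)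
      = ∑ σ : Equiv.Perm (Fin n), ((Equiv.Perm.sign σ : ℤ) : ℝ) * ∏ i, v i ^ (σ i : ℕ) := by
  rw [← Matrix.det_vandermonde v, ← Matrix.det_transpose, Matrix.det_apply']
  exact Finset.sum_congr rfl fun σ _ => by
    simp [Matrix.vandermonde_apply, Matrix.transpose_apply]

/-- Heine-type formula: the averaged characteristic polynomial of the Muttalib–Borodin
ensemble is a monic polynomial of degree k, orthogonal to x^{θj} for 0 ≤ j < k. -/
theorem heine_averaged_char_poly (k : ℕ) (θ : ℝ) (hθ : 0 < θ)
    (w : ℝ → ℝ) (hw : ∀ x, 0 ≤ w x) (hmeas : Measurable w)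
    (hmom : ∀ r : ℝ, 0 ≤ r → r ≤ 2 * k + 2 * θ * k →
      IntegrableOn (fun x : ℝ => w x * x ^ r) (Set.Ioi 0))
    (Z : ℝ)
    (hZ : Z = ∫ x in Set.univ.pi fun _ : Fin k => Set.Ioi (0:ℝ),
        (∏ i : Fin k, ∏ j ∈ Finset.Ioi i, (x j - x i) * (x j ^ θ - x i ^ θ)) *
          ∏ l : Fin k, w (x l))
    (hZpos : 0 < Z)
    (p : ℝ → ℝ)
    (hp : ∀ y : ℝ, p y =
      (∫ x in Set.univ.pi fun _ : Fin k => Set.Ioi (0:ℝ),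
        (∏ l : Fin k, (y - x l)) *
          ((∏ i : Fin k, ∏ j ∈ Finset.Ioi i, (x j - x i) * (x j ^ θ - x i ^ θ)) *
            ∏ l : Fin k, w (x l))) / Z) :
    ∃ P : Polynomial ℝ, P.Monic ∧ P.natDegree = k ∧ (∀ y : ℝ, p y = P.eval y) ∧
      ∀ j : ℕ, j < k →
        ∫ x in Set.Ioi (0:ℝ), w x * P.eval x * x ^ (θ * j) = 0 := by
  classical
  set Box : Set (Fin k → ℝ) := Set.univ.pi fun _ : Fin k => Set.Ioi (0:ℝ) with hBoxdef
  have hbox : MeasurableSet Box := MeasurableSet.univ_pi fun _ => measurableSet_Ioi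
  set F : (Fin k → ℝ) → ℝ :=
    fun X => (∏ i : Fin k, ∏ j ∈ Finset.Ioi i, (X j - X i) * (X j ^ θ - X i ^ θ)) *
      ∏ l : Fin k, w (X l) with hFdef
  set mom : ℝ → ℝ := fun r => ∫ y in Set.Ioi (0:ℝ), w y * y ^ r with hmomdef
  -- term integrability and value over the box
  have hTermInt : ∀ (e : Fin k → ℝ), (∀ i, 0 ≤ e i ∧ e i ≤ 2 * k + 2 * θ * k) →
      IntegrableOn (fun X : Fin k → ℝ => ∏ i, (w (X i) * X i ^ e i)) Box :=
    fun e he => box_integrable (f := fun i y => w y * y ^ e i)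
      (fun i => hmom _ (he i).1 (he i).2)
  have hTermVal : ∀ (e : Fin k → ℝ),
      (∫ X in Box, ∏ i, (w (X i) * X i ^ e i)) = ∏ i, mom (e i) :=
    fun e => box_integral (f := fun i y => w y * y ^ e i)
  -- split of the density
  have hFsplit : ∀ X : Fin k → ℝ, F X =
      ((∏ i : Fin k, ∏ j ∈ Finset.Ioi i, (X j - X i)) *
        (∏ i : Fin k, ∏ j ∈ Finset.Ioi i, (X j ^ θ - X i ^ θ))) * ∏ l : Fin k, w (X l) := by
    intro X
    simp only [hFdef, Finset.prod_mul_distrib]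
    -- exponent bounds
  have hk2 : (0:ℝ) ≤ (k:ℝ) := Nat.cast_nonneg k
  have hbound : ∀ (a b : ℕ), a ≤ k → b ≤ k →
      0 ≤ (a:ℝ) + θ * (b:ℝ) ∧ (a:ℝ) + θ * (b:ℝ) ≤ 2 * k + 2 * θ * k := by
    intro a b ha hb
    have ha' : (a:ℝ) ≤ k := by exact_mod_cast ha
    have hb' : (b:ℝ) ≤ k := by exact_mod_cast hb
    have h1 : θ * (b:ℝ) ≤ θ * k := mul_le_mul_of_nonneg_left hb' hθ.le
    have h2 : 0 ≤ θ * (b:ℝ) := mul_nonneg hθ.le (Nat.cast_nonneg b)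
    have h3 : 0 ≤ θ * (k:ℝ) := mul_nonneg hθ.le hk2
    constructor
    · positivity
    · nlinarith
  -- first expansion: full Vandermonde over k+1 points
  have hexp1 : ∀ (x : ℝ) (X : Fin k → ℝ), (∀ i, 0 < X i) →
      (∏ l : Fin k, (x - X l)) * F X
        = ∑ τ : Equiv.Perm (Fin k), ∑ π : Equiv.Perm (Fin (k+1)),
            ((-1:ℝ)^k * ((Equiv.Perm.sign π : ℤ):ℝ) * ((Equiv.Perm.sign τ : ℤ):ℝ)
              * x ^ (π 0 : ℕ))
              * ∏ i : Fin k, (w (X i) * X i ^ (((π i.succ : ℕ):ℝ) + θ * ((τ i : ℕ):ℝ))) := by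
    intro x X hX
    have hVsplit : (∏ i : Fin (k+1), ∏ j ∈ Finset.Ioi i,
          ((Fin.cons x X : Fin (k+1) → ℝ) j - (Fin.cons x X : Fin (k+1) → ℝ) i))
        = (∏ l : Fin k, (X l - x)) * (∏ i : Fin k, ∏ j ∈ Finset.Ioi i, (X j - X i)) := by
      rw [Fin.prod_univ_succ, Fin.prod_Ioi_zero]
      simp only [Fin.cons_succ, Fin.cons_zero, Fin.prod_Ioi_succ]
    have hsign : (∏ l : Fin k, (x - X l)) = (-1:ℝ)^k * ∏ l : Fin k, (X l - x) := by
      calc ∏ l : Fin k, (x - X l) = ∏ l : Fin k, (-1) * (X l - x) :=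
            Finset.prod_congr rfl fun l _ => by ring
        _ = (-1:ℝ)^k * ∏ l : Fin k, (X l - x) := by
            rw [Finset.prod_mul_distrib, Finset.prod_const, Finset.card_univ, Fintype.card_fin]
    have step1 : (∏ l : Fin k, (x - X l)) * F X
        = (-1:ℝ)^k * ((∏ i : Fin (k+1), ∏ j ∈ Finset.Ioi i,
            ((Fin.cons x X : Fin (k+1) → ℝ) j - (Fin.cons x X : Fin (k+1) → ℝ) i))
          * ((∏ i : Fin k, ∏ j ∈ Finset.Ioi i, (X j ^ θ - X i ^ θ)) *
              ∏ l : Fin k, w (X l))) := by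
      rw [hFsplit, hsign, hVsplit]; ring
    rw [step1, vandermonde_expand ((Fin.cons x X : Fin (k+1) → ℝ)),
      vandermonde_expand (fun i => X i ^ θ)]
    simp only [Finset.mul_sum, Finset.sum_mul]
    refine Finset.sum_congr rfl fun τ _ => ?_
    refine Finset.sum_congr rfl fun π _ => ?_
    have hvprod : ∏ i : Fin (k+1), (Fin.cons x X : Fin (k+1) → ℝ) i ^ (π i : ℕ)
        = x ^ ((π 0 : ℕ)) * ∏ i : Fin k, X i ^ ((π i.succ : ℕ)) := by
      rw [Fin.prod_univ_succ]
      simp only [Fin.cons_succ, Fin.cons_zero]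
    have hcomb : (∏ i : Fin k, X i ^ ((π i.succ : ℕ))) *
          ((∏ i : Fin k, (X i ^ θ) ^ ((τ i : ℕ))) * (∏ l : Fin k, w (X l)))
        = ∏ i : Fin k, (w (X i) * X i ^ (((π i.succ : ℕ):ℝ) + θ * ((τ i : ℕ):ℝ))) := by
      rw [← Finset.prod_mul_distrib, ← Finset.prod_mul_distrib]
      refine Finset.prod_congr rfl fun i _ => ?_
      rw [← Real.rpow_natCast (X i) (π i.succ : ℕ), ← Real.rpow_natCast (X i ^ θ) (τ i : ℕ),
        ← Real.rpow_mul (hX i).le, Real.rpow_add (hX i)]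
      ring
    rw [hvprod, ← hcomb]
    ring
    -- second expansion: subsets
  have hexp2 : ∀ (x : ℝ) (X : Fin k → ℝ),
      (∏ l : Fin k, (x - X l)) * F X
        = ∑ S : Finset (Fin k), x ^ (k - S.card) * ((∏ l ∈ S, -X l) * F X) := by
    intro x X
    have h1 : (∏ l : Fin k, (x - X l))
        = ∑ S : Finset (Fin k), (∏ l ∈ S, -X l) * x ^ (k - S.card) := by
      calc ∏ l : Fin k, (x - X l) = ∏ l : Fin k, (-X l + x) :=
            Finset.prod_congr rfl fun l _ => by ring
        _ = ∑ S ∈ (Finset.univ : Finset (Fin k)).powerset,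
              (∏ l ∈ S, -X l) * ∏ l ∈ Finset.univ \ S, x :=
            Finset.prod_add _ _ _
        _ = ∑ S : Finset (Fin k), (∏ l ∈ S, -X l) * x ^ (k - S.card) := by
            rw [Finset.powerset_univ]
            refine Finset.sum_congr rfl fun S _ => ?_
            rw [Finset.prod_const, Finset.card_univ_diff, Fintype.card_fin]
    rw [h1, Finset.sum_mul]
    exact Finset.sum_congr rfl fun S _ => by ring
  -- third expansion: of the subset-weighted density
  have hexp3 : ∀ (S : Finset (Fin k)) (X : Fin k → ℝ), (∀ i, 0 < X i) →
      (∏ l ∈ S, -X l) * F X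
        = ∑ σ : Equiv.Perm (Fin k), ∑ τ : Equiv.Perm (Fin k),
            ((-1:ℝ)^S.card * ((Equiv.Perm.sign σ : ℤ):ℝ) * ((Equiv.Perm.sign τ : ℤ):ℝ))
              * ∏ i : Fin k, (w (X i) *
                  X i ^ ((if i ∈ S then (1:ℝ) else 0) + ((σ i : ℕ):ℝ) + θ * ((τ i : ℕ):ℝ))) := by
    intro S X hX
    have h1 : (∏ l ∈ S, -X l) = (-1:ℝ)^S.card * ∏ i : Fin k, X i ^ (if i ∈ S then (1:ℝ) else 0) := by
      calc ∏ l ∈ S, -X l = ∏ l ∈ S, (-1) * X l := Finset.prod_congr rfl fun l _ => by ring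
        _ = (-1:ℝ)^S.card * ∏ l ∈ S, X l := by
            rw [Finset.prod_mul_distrib, Finset.prod_const]
        _ = (-1:ℝ)^S.card * ∏ i : Fin k, X i ^ (if i ∈ S then (1:ℝ) else 0) := by
            congr 1
            rw [show (∏ i : Fin k, X i ^ (if i ∈ S then (1:ℝ) else 0))
                = ∏ i : Fin k, (if i ∈ S then X i else 1) from
              Finset.prod_congr rfl fun i _ => by
                split_ifs <;> simp [Real.rpow_one, Real.rpow_zero]]
            rw [Finset.prod_ite_mem, Finset.univ_inter]
    rw [hFsplit, h1, vandermonde_expand X, vandermonde_expand (fun i => X i ^ θ)]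
    simp only [Finset.mul_sum, Finset.sum_mul]
    rw [Finset.sum_comm]
    refine Finset.sum_congr rfl fun σ _ => ?_
    refine Finset.sum_congr rfl fun τ _ => ?_
    have hcomb : (∏ i : Fin k, X i ^ (if i ∈ S then (1:ℝ) else 0)) *
          ((∏ i : Fin k, X i ^ ((σ i : ℕ))) *
            ((∏ i : Fin k, (X i ^ θ) ^ ((τ i : ℕ))) * (∏ l : Fin k, w (X l))))
        = ∏ i : Fin k, (w (X i) *
            X i ^ ((if i ∈ S then (1:ℝ) else 0) + ((σ i : ℕ):ℝ) + θ * ((τ i : ℕ):ℝ))) := by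
      rw [← Finset.prod_mul_distrib, ← Finset.prod_mul_distrib, ← Finset.prod_mul_distrib]
      refine Finset.prod_congr rfl fun i _ => ?_
      rw [← Real.rpow_natCast (X i) (σ i : ℕ), ← Real.rpow_natCast (X i ^ θ) (τ i : ℕ),
        ← Real.rpow_mul (hX i).le, Real.rpow_add (hX i), Real.rpow_add (hX i)]
      ring
    rw [← hcomb]
    ring
    -- a.e. positivity on the box
  have haeBox : ∀ᵐ X ∂(volume.restrict Box), ∀ i, 0 < X i := by
    filter_upwards [ae_restrict_mem hbox] with X hXmem
    exact fun i => Set.mem_Ioi.mp (hXmem i (Set.mem_univ i))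
  have hbnd1 : ∀ (π : Equiv.Perm (Fin (k+1))) (τ : Equiv.Perm (Fin k)) (i : Fin k),
      0 ≤ ((π i.succ : ℕ):ℝ) + θ * ((τ i : ℕ):ℝ) ∧
        ((π i.succ : ℕ):ℝ) + θ * ((τ i : ℕ):ℝ) ≤ 2 * k + 2 * θ * k :=
    fun π τ i => hbound _ _ (Fin.is_le _) (Fin.is_lt _).le
  have hIfun1 : ∀ x : ℝ, (∫ X in Box, (∏ l : Fin k, (x - X l)) * F X)
      = ∑ τ : Equiv.Perm (Fin k), ∑ π : Equiv.Perm (Fin (k+1)),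
          ((-1:ℝ)^k * ((Equiv.Perm.sign π : ℤ):ℝ) * ((Equiv.Perm.sign τ : ℤ):ℝ)
            * x ^ (π 0 : ℕ))
            * ∏ i : Fin k, mom (((π i.succ : ℕ):ℝ) + θ * ((τ i : ℕ):ℝ)) := by
    intro x
    have hae : (fun X : Fin k → ℝ => (∏ l : Fin k, (x - X l)) * F X)
        =ᵐ[volume.restrict Box]
        (fun X : Fin k → ℝ => ∑ τ : Equiv.Perm (Fin k), ∑ π : Equiv.Perm (Fin (k+1)),
          ((-1:ℝ)^k * ((Equiv.Perm.sign π : ℤ):ℝ) * ((Equiv.Perm.sign τ : ℤ):ℝ)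
            * x ^ (π 0 : ℕ))
            * ∏ i : Fin k, (w (X i) * X i ^ (((π i.succ : ℕ):ℝ) + θ * ((τ i : ℕ):ℝ)))) := by
      filter_upwards [haeBox] with X hX
      exact hexp1 x X hX
    rw [integral_congr_ae hae,
      integral_finset_sum _ (fun τ _ => integrable_finset_sum _ (fun π _ =>
        (hTermInt _ (hbnd1 π τ)).const_mul _))]
    refine Finset.sum_congr rfl fun τ _ => ?_
    rw [integral_finset_sum _ (fun π _ => (hTermInt _ (hbnd1 π τ)).const_mul _)]
    refine Finset.sum_congr rfl fun π _ => ?_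
    rw [integral_const_mul, hTermVal]
  -- the coefficients of the polynomial
  set A : Finset (Fin k) → ℝ := fun S => ∫ X in Box, (∏ l ∈ S, -X l) * F X with hAdef
  have hbnd3 : ∀ (S : Finset (Fin k)) (σ τ : Equiv.Perm (Fin k)) (i : Fin k),
      0 ≤ (if i ∈ S then (1:ℝ) else 0) + ((σ i : ℕ):ℝ) + θ * ((τ i : ℕ):ℝ) ∧
        (if i ∈ S then (1:ℝ) else 0) + ((σ i : ℕ):ℝ) + θ * ((τ i : ℕ):ℝ)
          ≤ 2 * k + 2 * θ * k := by
    intro S σ τ i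
    have h1 : ((σ i : ℕ):ℝ) ≤ (k:ℝ) - 1 := by
      have h := (Fin.is_lt (σ i))
      have h' : (σ i : ℕ) + 1 ≤ k := h
      have h'' : ((σ i : ℕ):ℝ) + 1 ≤ (k:ℝ) := by exact_mod_cast h'
      linarith
    have h2 : ((τ i : ℕ):ℝ) ≤ (k:ℝ) := by exact_mod_cast (Fin.is_lt (τ i)).le
    have h3 : (0:ℝ) ≤ ((σ i : ℕ):ℝ) := Nat.cast_nonneg _
    have h4 : (0:ℝ) ≤ ((τ i : ℕ):ℝ) := Nat.cast_nonneg _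
    have h5 : θ * ((τ i : ℕ):ℝ) ≤ θ * k := mul_le_mul_of_nonneg_left h2 hθ.le
    have h6 : 0 ≤ θ * ((τ i : ℕ):ℝ) := mul_nonneg hθ.le h4
    have h7 : 0 ≤ θ * (k:ℝ) := mul_nonneg hθ.le hk2
    constructor
    · split_ifs <;> linarith
    · split_ifs <;> nlinarith
  have hAint : ∀ S : Finset (Fin k),
      IntegrableOn (fun X : Fin k → ℝ => (∏ l ∈ S, -X l) * F X) Box := by
    intro S
    have hint : IntegrableOn (fun X : Fin k → ℝ =>
        ∑ σ : Equiv.Perm (Fin k), ∑ τ : Equiv.Perm (Fin k),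
          ((-1:ℝ)^S.card * ((Equiv.Perm.sign σ : ℤ):ℝ) * ((Equiv.Perm.sign τ : ℤ):ℝ))
            * ∏ i : Fin k, (w (X i) *
                X i ^ ((if i ∈ S then (1:ℝ) else 0) + ((σ i : ℕ):ℝ) + θ * ((τ i : ℕ):ℝ)))) Box :=
      integrable_finset_sum _ (fun σ _ => integrable_finset_sum _ (fun τ _ =>
        (hTermInt _ (hbnd3 S σ τ)).const_mul _))
    exact hint.congr (by filter_upwards [haeBox] with X hX; exact (hexp3 S X hX).symm)
  have hIfun2 : ∀ x : ℝ, (∫ X in Box, (∏ l : Fin k, (x - X l)) * F X)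
      = ∑ S : Finset (Fin k), x ^ (k - S.card) * A S := by
    intro x
    rw [integral_congr_ae (Filter.Eventually.of_forall (fun X => hexp2 x X)),
      integral_finset_sum _ (fun S _ => (hAint S).const_mul _)]
    exact Finset.sum_congr rfl fun S _ => integral_const_mul _ _
  have hZne : Z ≠ 0 := ne_of_gt hZpos
  set P : Polynomial ℝ :=
    ∑ S : Finset (Fin k), Polynomial.C (A S / Z) * Polynomial.X ^ (k - S.card) with hPdef
  have hA0 : A ∅ = Z := by
    have h1 : A ∅ = ∫ X in Box, F X := by
      simp only [hAdef, Finset.prod_empty, one_mul]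
    rw [h1]
    exact hZ.symm
  have hcoeffk : P.coeff k = 1 := by
    rw [hPdef, Polynomial.finset_sum_coeff]
    rw [Finset.sum_eq_single (∅ : Finset (Fin k))]
    · rw [Polynomial.coeff_C_mul, Polynomial.coeff_X_pow]
      simp [hA0, div_self hZne]
    · intro S _ hS
      rw [Polynomial.coeff_C_mul, Polynomial.coeff_X_pow]
      have hne : ¬ (k = k - S.card) := by
        have hScard : 0 < S.card := Finset.card_pos.2 (Finset.nonempty_iff_ne_empty.2 hS)
        have hle : S.card ≤ k := by
          have := Finset.card_le_univ S
          simpa [Finset.card_univ] using this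
        omega
      simp [hne]
    · intro h; exact absurd (Finset.mem_univ _) h
  have hdegle : P.natDegree ≤ k := by
    rw [hPdef]
    refine Polynomial.natDegree_sum_le_of_forall_le _ _ fun S _ => ?_
    refine le_trans (Polynomial.natDegree_C_mul_le _ _) ?_
    rw [Polynomial.natDegree_X_pow]
    exact Nat.sub_le k _
  have hmonic : P.Monic := Polynomial.monic_of_natDegree_le_of_coeff_eq_one k hdegle hcoeffk
  have hdeg : P.natDegree = k :=
    le_antisymm hdegle (Polynomial.le_natDegree_of_ne_zero (by rw [hcoeffk]; exact one_ne_zero))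
  have hPeval : ∀ x : ℝ, P.eval x = ∑ S : Finset (Fin k), (A S / Z) * x ^ (k - S.card) := by
    intro x
    rw [hPdef, Polynomial.eval_finset_sum]
    exact Finset.sum_congr rfl fun S _ => by simp
  have hpeq : ∀ y : ℝ, p y = P.eval y := by
    intro y
    have h2 : (∫ x in Box, (∏ l : Fin k, (y - x l)) *
        ((∏ i : Fin k, ∏ j ∈ Finset.Ioi i, (x j - x i) * (x j ^ θ - x i ^ θ)) *
          ∏ l : Fin k, w (x l))) = ∑ S : Finset (Fin k), y ^ (k - S.card) * A S := hIfun2 y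
    rw [hp y, h2, hPeval y, Finset.sum_div]
    exact Finset.sum_congr rfl fun S _ => by ring
  refine ⟨P, hmonic, hdeg, hpeq, ?_⟩
  intro j hj
  have hPx : ∀ x : ℝ, P.eval x
      = (∑ τ : Equiv.Perm (Fin k), ∑ π : Equiv.Perm (Fin (k+1)),
          ((-1:ℝ)^k * ((Equiv.Perm.sign π : ℤ):ℝ) * ((Equiv.Perm.sign τ : ℤ):ℝ)
            * x ^ (π 0 : ℕ))
            * ∏ i : Fin k, mom (((π i.succ : ℕ):ℝ) + θ * ((τ i : ℕ):ℝ))) / Z := by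
    intro x
    rw [← hpeq x, hp x]
    congr 1
    exact hIfun1 x
  have hjcast : ((⟨j, hj⟩ : Fin k) : ℕ) = j := rfl
  have hmomint : ∀ π : Equiv.Perm (Fin (k+1)),
      IntegrableOn (fun x : ℝ => w x * x ^ (((π 0 : ℕ):ℝ) + θ * (j:ℝ))) (Set.Ioi 0) := by
    intro π
    refine hmom _ ?_ ?_
    · have h1 : (0:ℝ) ≤ ((π 0 : ℕ):ℝ) := Nat.cast_nonneg _
      have h2 : (0:ℝ) ≤ θ * (j:ℝ) := mul_nonneg hθ.le (Nat.cast_nonneg _)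
      linarith
    · have h1 : ((π 0 : ℕ):ℝ) ≤ (k:ℝ) := by exact_mod_cast Fin.is_le (π 0)
      have h2 : ((j:ℕ):ℝ) ≤ (k:ℝ) := by exact_mod_cast hj.le
      have h5 : θ * (j:ℝ) ≤ θ * k := mul_le_mul_of_nonneg_left h2 hθ.le
      have h7 : 0 ≤ θ * (k:ℝ) := mul_nonneg hθ.le hk2
      nlinarith
  have hkey : ∀ x ∈ Set.Ioi (0:ℝ), w x * P.eval x * x ^ (θ * (j:ℝ))
      = ∑ τ : Equiv.Perm (Fin k), ∑ π : Equiv.Perm (Fin (k+1)),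
          (((-1:ℝ)^k * ((Equiv.Perm.sign π : ℤ):ℝ) * ((Equiv.Perm.sign τ : ℤ):ℝ)
            * ∏ i : Fin k, mom (((π i.succ : ℕ):ℝ) + θ * ((τ i : ℕ):ℝ))) / Z)
            * (w x * x ^ (((π 0 : ℕ):ℝ) + θ * (j:ℝ))) := by
    intro x hx
    rw [hPx x]
    simp only [Finset.sum_div, Finset.mul_sum, Finset.sum_mul]
    refine Finset.sum_congr rfl fun τ _ => ?_
    refine Finset.sum_congr rfl fun π _ => ?_
    rw [Real.rpow_add hx, Real.rpow_natCast]
    ring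
  have hstep : (∫ x in Set.Ioi (0:ℝ), w x * P.eval x * x ^ (θ * (j:ℝ)))
      = ∑ τ : Equiv.Perm (Fin k), ∑ π : Equiv.Perm (Fin (k+1)),
          (((-1:ℝ)^k * ((Equiv.Perm.sign π : ℤ):ℝ) * ((Equiv.Perm.sign τ : ℤ):ℝ)
            * ∏ i : Fin k, mom (((π i.succ : ℕ):ℝ) + θ * ((τ i : ℕ):ℝ))) / Z)
            * mom (((π 0 : ℕ):ℝ) + θ * (j:ℝ)) := by
    have hae : (fun x : ℝ => w x * P.eval x * x ^ (θ * (j:ℝ)))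
        =ᵐ[volume.restrict (Set.Ioi (0:ℝ))]
        (fun x : ℝ => ∑ τ : Equiv.Perm (Fin k), ∑ π : Equiv.Perm (Fin (k+1)),
          (((-1:ℝ)^k * ((Equiv.Perm.sign π : ℤ):ℝ) * ((Equiv.Perm.sign τ : ℤ):ℝ)
            * ∏ i : Fin k, mom (((π i.succ : ℕ):ℝ) + θ * ((τ i : ℕ):ℝ))) / Z)
            * (w x * x ^ (((π 0 : ℕ):ℝ) + θ * (j:ℝ)))) := by
      filter_upwards [ae_restrict_mem measurableSet_Ioi] with x hx
      exact hkey x hx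
    rw [integral_congr_ae hae,
      integral_finset_sum _ (fun τ _ => integrable_finset_sum _ (fun π _ =>
        (hmomint π).const_mul _))]
    refine Finset.sum_congr rfl fun τ _ => ?_
    rw [integral_finset_sum _ (fun π _ => (hmomint π).const_mul _)]
    refine Finset.sum_congr rfl fun π _ => ?_
    rw [integral_const_mul]
  rw [hstep]
  refine Finset.sum_eq_zero fun τ _ => ?_
  set Mt : Matrix (Fin (k+1)) (Fin (k+1)) ℝ := Matrix.of fun l i =>
      mom (((l : ℕ):ℝ) + θ * ((Fin.cons (j:ℝ) (fun i' => ((τ i' : ℕ):ℝ)) : Fin (k+1) → ℝ) i)) with hMt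
  have hdetzero : Mt.det = 0 := by
    refine Matrix.det_zero_of_column_eq
      (i := (τ.symm ⟨j, hj⟩).succ) (j := (0 : Fin (k+1))) (Fin.succ_ne_zero _) ?_
    intro l
    simp only [hMt, Matrix.of_apply, Fin.cons_succ, Fin.cons_zero]
    rw [Equiv.apply_symm_apply]
  have hsum : (∑ π : Equiv.Perm (Fin (k+1)),
      (((-1:ℝ)^k * ((Equiv.Perm.sign π : ℤ):ℝ) * ((Equiv.Perm.sign τ : ℤ):ℝ)
        * ∏ i : Fin k, mom (((π i.succ : ℕ):ℝ) + θ * ((τ i : ℕ):ℝ))) / Z)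
        * mom (((π 0 : ℕ):ℝ) + θ * (j:ℝ)))
      = ((-1:ℝ)^k * ((Equiv.Perm.sign τ : ℤ):ℝ) / Z) * Mt.det := by
    rw [Matrix.det_apply', Finset.mul_sum]
    refine Finset.sum_congr rfl fun π _ => ?_
    rw [Fin.prod_univ_succ]
    simp only [hMt, Matrix.of_apply, Fin.cons_zero, Fin.cons_succ]
    ring
  rw [hsum, hdetzero, mul_zero]
end

section
/- Pieri-type expansion: for distinct reals γ_1,...,γ_N and positive reals x_1,...,x_N, e_{N-ν}(x_1,...,x_N) · det[x_j^{γ_i}]_{i,j=1}^N = Σ_{1≤l_1<...<l_{N-ν}≤N} det[x_j^{γ_i^{(l)}}]_{i,j=1}^N, where γ_i^{(l)} = γ_i + 1 if i ∈ {l_1,...,l_{N-ν}} and γ_i^{(l)} = γ_i otherwise. -/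
/-- Pieri-type expansion: e_{N-ν}(x)·det[x_j^{γ_i}] = Σ over (N-ν)-subsets S of the
determinants with exponents γ_i incremented on S. -/
theorem pieri_type_expansion (N ν : ℕ) (hν : ν ≤ N)
    (γ : Fin N → ℝ) (hγ : Function.Injective γ)
    (x : Fin N → ℝ) (hx : ∀ i, 0 < x i) :
    (∑ T ∈ Finset.univ.powersetCard (N - ν), ∏ i ∈ T, x i) *
        Matrix.det (Matrix.of fun i j : Fin N => x j ^ γ i) =
      ∑ S ∈ Finset.univ.powersetCard (N - ν),
        Matrix.det (Matrix.of fun i j : Fin N =>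
          x j ^ (if i ∈ S then γ i + 1 else γ i)) := by
  simp only [Matrix.det_apply, Matrix.of_apply]
  rw [Finset.mul_sum, Finset.sum_comm]
  refine Finset.sum_congr rfl fun σ _ => ?_
  have hstep : ∀ S : Finset (Fin N),
      (∏ i, x i ^ (if i ∈ S then γ (σ i) + 1 else γ (σ i)))
        = (∏ i, x i ^ γ (σ i)) * ∏ i ∈ S, x i := by
    intro S
    have : ∀ i, x i ^ (if i ∈ S then γ (σ i) + 1 else γ (σ i))
        = x i ^ γ (σ i) * (if i ∈ S then x i else 1) := by
      intro i
      split_ifs with h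
      · rw [Real.rpow_add_one (hx i).ne']
      · rw [mul_one]
    rw [Finset.prod_congr rfl fun i _ => this i, Finset.prod_mul_distrib,
      Finset.prod_ite_mem, Finset.univ_inter]
  -- reindex S ↦ S.image σ
  have hre : ∑ S ∈ Finset.univ.powersetCard (N - ν),
      (Equiv.Perm.sign σ • ∏ i, x i ^ (if σ i ∈ S then γ (σ i) + 1 else γ (σ i)))
      = ∑ S ∈ Finset.univ.powersetCard (N - ν),
      (Equiv.Perm.sign σ • ∏ i, x i ^ (if i ∈ S then γ (σ i) + 1 else γ (σ i))) := by
    refine Finset.sum_nbij' (fun S => S.image σ.symm) (fun S => S.image σ) ?_ ?_ ?_ ?_ ?_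
    · intro S hS
      simp only [Finset.mem_powersetCard] at hS ⊢
      exact ⟨Finset.subset_univ _, by rw [Finset.card_image_of_injective _ σ.symm.injective, hS.2]⟩
    · intro S hS
      simp only [Finset.mem_powersetCard] at hS ⊢
      exact ⟨Finset.subset_univ _, by rw [Finset.card_image_of_injective _ σ.injective, hS.2]⟩
    · intro S _; simp [Finset.image_image, Function.comp]
    · intro S _; simp [Finset.image_image, Function.comp]
    · intro S _
      congr 1
      refine Finset.prod_congr rfl fun i _ => ?_
      congr 1
      simp only [Finset.mem_image]
      by_cases h : σ i ∈ S
      · rw [if_pos h, if_pos]; exact ⟨σ i, h, σ.symm_apply_apply i⟩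
      · rw [if_neg h, if_neg]
        rintro ⟨a, ha, rfl⟩
        exact h (by simpa using ha)
  rw [hre]
  rw [Finset.sum_congr rfl fun S _ => congrArg _ (hstep S)]
  rw [← Finset.smul_sum, ← Finset.mul_sum]
  simp only [Units.smul_def, zsmul_eq_mul]
  ring
end
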